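/- Let X be a smooth complex projective variety of dimension n with a Kähler metric, and let c be a closed integral current on X of dimension 2p+k whose components lie only in bidimensions (p+r, p+s) with r+s = k and |r-s| ≤ k. Then the harmonic part H(c) has no components in bidimension (p+r, p+s) with r > k+1; consequently the Hodge spark (a, c) with a = -Ψ(d*G(c)) satisfies δ₁(â) = 0 in the spark complex of level q = n-p-k-1, i.e. the spark class â lies in the Deligne cohomology H^{2(n-p)-k}_D(X, ℤ(n-p-k-1)). -/

import Mathlib

/-!
STATEMENT 10. Let `X` be a smooth complex projective variety of dimension `n` with a Kähler
metric, and let `c` be a closed integral current on `X` of dimension `2p+k` whose components lie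
only in bidimensions `(p+r, p+s)` with `r+s = k` and `|r-s| ≤ k`.  Then the harmonic part `H(c)`
has no components in bidimension `(p+r, p+s)` with `r > k+1`; consequently the Hodge spark
`(a, c)`, `a = -Ψ(d*G(c))`, satisfies `δ₁(â) = Ψ(H(c)) = 0` in the spark complex of level
`q = n-p-k-1`, i.e. the spark class `â` lies in the Deligne cohomology
`H^{2(n-p)-k}_D(X, ℤ(n-p-k-1))`.

We axiomatize: `V` is the abelian group of currents of dimension `2p+k` on `X`; for `r : ℤ`,
`π r` is the projection onto the component of bidimension `(p+r, p+(k-r))`; `H` is the harmonic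
projection, which preserves the bidecomposition since the metric is Kähler (`hH`); `Ψ` is the
truncation, appearing in `δ₁` for the spark complex of Example 2.2 at level `q = n-p-k-1`,
which keeps exactly the components with `r > k+1` (`hΨ`); `δ₁(â)` is computed as `Ψ(H c)`
(kernel of `δ₁` = Deligne cohomology).
-/
theorem harmonic_part_type_vanishing_and_delta_one_zero
    (n p : ℕ) (k : ℤ)
    (V : Type*) [AddCommGroup V]
    (π : ℤ → (V →+ V)) (H Ψ : V →+ V)
    (hidem : ∀ r x, π r (π r x) = π r x)
    (horth : ∀ r r', r ≠ r' → ∀ x, π r (π r' x) = 0)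
    (hsep : ∀ x y : V, (∀ r, π r x = π r y) → x = y)
    -- Kähler: harmonic projection preserves the bidegree decomposition
    (hH : ∀ r x, π r (H x) = H (π r x))
    -- `Ψ` is the truncation keeping exactly the components of `δ₁` (those with `r > k+1`)
    (hΨgt : ∀ r, k + 1 < r → ∀ x, π r (Ψ x) = π r x)
    (hΨle : ∀ r, r ≤ k + 1 → ∀ x, π r (Ψ x) = 0)
    -- `c` has components only in bidimensions `(p+r, p+s)`, `r+s = k`, `|r-s| ≤ k`
    (c : V)
    (hc : ∀ r : ℤ, ¬ |r - (k - r)| ≤ k → π r c = 0) :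
    (∀ r : ℤ, k + 1 < r → π r (H c) = 0) ∧ Ψ (H c) = 0 := by
  have hvan : ∀ r : ℤ, k + 1 < r → π r (H c) = 0 := by
    intro r hr
    have hpc : π r c = 0 := by
      apply hc
      rw [abs_le]
      push_neg
      intro h
      omega
    rw [hH, hpc, map_zero]
  refine ⟨hvan, hsep _ 0 fun r => ?_⟩
  rw [map_zero]
  rcases le_or_gt r (k + 1) with h | h
  · exact hΨle r h _
  · rw [hΨgt r h, hvan r h]
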